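/- The function ĝ is continuous and strictly decreasing on ℝ, with ĝ(z) → 0 as z → +∞ and ĝ(z) → +∞ as z → −∞; consequently, for every α > 0 there exists a unique z ∈ ℝ with ĝ(z) = α. -/

import Mathlib

/-- Worst-case CPGF value `ĝ(z) = min_{(a,b)∈A} G(exp(a_i − b_i (z + c_i)))`. -/
noncomputable def ghat (m : ℕ) (G : (Fin m → ℝ) → ℝ) (c : Fin m → ℝ)
    (A : Set ((Fin m → ℝ) × (Fin m → ℝ))) (z : ℝ) : ℝ :=
  sInf ((fun ab : (Fin m → ℝ) × (Fin m → ℝ) =>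
    G fun i => Real.exp (ab.1 i - ab.2 i * (z + c i))) '' A)

/-- `ĝ` is continuous and strictly decreasing on `ℝ`, tends to `0`
at `+∞` and to `+∞` at `−∞`; hence every `α > 0` equals `ĝ(z)` for exactly one `z`. -/
theorem stmt_4
    (m : ℕ) (hm : 1 ≤ m)
    (G : (Fin m → ℝ) → ℝ)
    (hGsmooth : ContDiffOn ℝ 1 G {Y : Fin m → ℝ | ∀ i, 0 < Y i})
    (hGhom : ∀ lam : ℝ, 0 < lam → ∀ Y : Fin m → ℝ, (∀ i, 0 < Y i) →
      G (lam • Y) = lam * G Y)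
    (hGd1 : ∀ Y : Fin m → ℝ, (∀ i, 0 < Y i) → ∀ i : Fin m,
      0 < fderiv ℝ G Y (Pi.single i 1))
    (c : Fin m → ℝ) (hc : ∀ i, 0 ≤ c i)
    (A : Set ((Fin m → ℝ) × (Fin m → ℝ)))
    (hAne : A.Nonempty) (hAcomp : IsCompact A)
    (hAb : ∀ ab ∈ A, ∃ β : ℝ, 0 < β ∧ ∀ i, ab.2 i = β) :
    Continuous (ghat m G c A) ∧
    StrictAnti (ghat m G c A) ∧
    Filter.Tendsto (ghat m G c A) Filter.atTop (nhds 0) ∧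
    Filter.Tendsto (ghat m G c A) Filter.atBot Filter.atTop ∧
    ∀ α : ℝ, 0 < α → ∃! z : ℝ, ghat m G c A z = α := by
  classical
  open Filter Set Real in
  have i0 : Fin m := ⟨0, hm⟩
  haveI : Nonempty (Fin m) := ⟨i0⟩
  -- the positive orthant is open
  have hSopen : IsOpen {Y : Fin m → ℝ | ∀ i, 0 < Y i} := by
    have : {Y : Fin m → ℝ | ∀ i, 0 < Y i} = Set.pi Set.univ fun _ => Set.Ioi (0:ℝ) := by
      ext Y; simp [Set.mem_pi]
    rw [this]
    exact isOpen_set_pi Set.finite_univ fun i _ => isOpen_Ioi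
  have hGdiff : ∀ Y : Fin m → ℝ, (∀ i, 0 < Y i) → DifferentiableAt ℝ G Y := by
    intro Y hY
    exact ((hGsmooth.differentiableOn one_ne_zero) Y hY).differentiableAt (hSopen.mem_nhds hY)
  -- G is positive on the positive orthant (Euler identity argument)
  have hGpos : ∀ Y : Fin m → ℝ, (∀ i, 0 < Y i) → 0 < G Y := by
    intro Y hY
    have h1 : HasDerivAt (fun l : ℝ => l • Y) Y 1 := by
      simpa using (hasDerivAt_id (1:ℝ)).smul_const Y
    have h2 : HasFDerivAt G (fderiv ℝ G Y) ((fun l : ℝ => l • Y) 1) := by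
      simpa [one_smul] using (hGdiff Y hY).hasFDerivAt
    have hD : HasDerivAt (fun l : ℝ => G (l • Y)) ((fderiv ℝ G Y) Y) 1 :=
      h2.comp_hasDerivAt (1:ℝ) h1
    have hEq : (fun l : ℝ => G (l • Y)) =ᶠ[nhds (1:ℝ)] fun l => l * G Y := by
      filter_upwards [eventually_gt_nhds (zero_lt_one (α := ℝ))] with l hl
      exact hGhom l hl Y hY
    have hD2 : HasDerivAt (fun l : ℝ => G (l • Y)) (G Y) 1 := by
      have h3 : HasDerivAt (fun l : ℝ => l * G Y) (G Y) 1 := by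
        simpa using (hasDerivAt_id (1:ℝ)).mul_const (G Y)
      exact h3.congr_of_eventuallyEq hEq
    have hGY : G Y = (fderiv ℝ G Y) Y := hD2.unique hD
    have hYsum : (∑ i, Y i • (Pi.single i 1 : Fin m → ℝ)) = Y := by
      calc ∑ i, Y i • (Pi.single i 1 : Fin m → ℝ) = ∑ i, Pi.single i (Y i) := by
            refine Finset.sum_congr rfl fun i _ => ?_
            rw [← Pi.single_smul, smul_eq_mul, mul_one]
        _ = Y := Finset.univ_sum_single Y
    have hsum : (fderiv ℝ G Y) Y = ∑ i, Y i * (fderiv ℝ G Y) (Pi.single i 1) := by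
      calc (fderiv ℝ G Y) Y
          = (fderiv ℝ G Y) (∑ i, Y i • (Pi.single i 1 : Fin m → ℝ)) := by rw [hYsum]
        _ = ∑ i, Y i * (fderiv ℝ G Y) (Pi.single i 1) := by
            rw [map_sum]
            refine Finset.sum_congr rfl fun i _ => ?_
            rw [map_smul, smul_eq_mul]
    rw [hGY, hsum]
    exact Finset.sum_pos (fun i _ => mul_pos (hY i) (hGd1 Y hY i)) Finset.univ_nonempty
  -- abbreviations
  set K : (Fin m → ℝ) × (Fin m → ℝ) → ℝ :=
    fun ab => G (fun i => Real.exp (ab.1 i - ab.2 i0 * c i)) with hKdef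
  set fz : ℝ → (Fin m → ℝ) × (Fin m → ℝ) → ℝ :=
    fun z ab => K ab * Real.exp (-(ab.2 i0) * z) with hfzdef
  have hKpos : ∀ ab, 0 < K ab := fun ab => hGpos _ (fun i => Real.exp_pos _)
  have hβpos : ∀ ab ∈ A, 0 < ab.2 i0 := by
    intro ab hab
    obtain ⟨b, hb, he⟩ := hAb ab hab
    rw [he i0]; exact hb
  have hF : ∀ ab ∈ A, ∀ z : ℝ,
      G (fun i => Real.exp (ab.1 i - ab.2 i * (z + c i))) = fz z ab := by
    intro ab hab z
    obtain ⟨b, hb, he⟩ := hAb ab hab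
    have hvec : (fun i => Real.exp (ab.1 i - ab.2 i * (z + c i)))
        = Real.exp (-(ab.2 i0) * z) • (fun i => Real.exp (ab.1 i - ab.2 i0 * c i)) := by
      funext i
      simp only [Pi.smul_apply, smul_eq_mul, ← Real.exp_add, he i, he i0]
      congr 1; ring
    rw [hvec, hGhom _ (Real.exp_pos _) _ (fun i => Real.exp_pos _), hfzdef, mul_comm]
  have hgdef : ∀ z, ghat m G c A z = sInf (fz z '' A) := by
    intro z
    unfold ghat
    congr 1
    exact Set.image_congr fun ab hab => hF ab hab z
  -- continuity of the ingredients in ab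
  have hveccont : Continuous (fun ab : (Fin m → ℝ) × (Fin m → ℝ) =>
      fun i => Real.exp (ab.1 i - ab.2 i0 * c i)) := by
    apply continuous_pi
    intro i
    exact Real.continuous_exp.comp (((continuous_apply i).comp continuous_fst).sub
      (((continuous_apply i0).comp continuous_snd).mul continuous_const))
  have hKcont : ContinuousOn K A := by
    refine hGsmooth.continuousOn.comp hveccont.continuousOn ?_
    intro ab _
    exact fun i => Real.exp_pos _
  have hβcont : Continuous (fun ab : (Fin m → ℝ) × (Fin m → ℝ) => ab.2 i0) :=
    (continuous_apply i0).comp continuous_snd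
  have hfzcont : ∀ z, ContinuousOn (fz z) A := by
    intro z
    exact hKcont.mul ((Real.continuous_exp.comp (hβcont.neg.mul continuous_const)).continuousOn)
  -- minimizers
  have hmin : ∀ z, ∃ ab ∈ A, ghat m G c A z = fz z ab := by
    intro z
    obtain ⟨ab, hab, he⟩ := hAcomp.exists_sInf_image_eq hAne (hfzcont z)
    exact ⟨ab, hab, by rw [hgdef z, he]⟩
  have hub : ∀ z, ∀ ab ∈ A, ghat m G c A z ≤ fz z ab := by
    intro z ab hab
    rw [hgdef z]
    exact csInf_le (hAcomp.image_of_continuousOn (hfzcont z)).bddBelow ⟨ab, hab, rfl⟩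
  have hgpos : ∀ z, 0 < ghat m G c A z := by
    intro z
    obtain ⟨ab, hab, he⟩ := hmin z
    rw [he]
    exact mul_pos (hKpos ab) (Real.exp_pos _)
  -- strict antitonicity
  have hSA : StrictAnti (ghat m G c A) := by
    intro z1 z2 h12
    obtain ⟨ab, hab, he⟩ := hmin z1
    have hb := hβpos ab hab
    calc ghat m G c A z2 ≤ fz z2 ab := hub z2 ab hab
      _ < fz z1 ab := by
          apply mul_lt_mul_of_pos_left _ (hKpos ab)
          exact Real.exp_lt_exp.2 (by nlinarith)
      _ = ghat m G c A z1 := he.symm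
  -- extremizers of K and β over A
  obtain ⟨abK, habK, hKmax'⟩ := hAcomp.exists_isMaxOn hAne hKcont
  obtain ⟨abB, habB, hβmax'⟩ := hAcomp.exists_isMaxOn hAne hβcont.continuousOn
  obtain ⟨abk, habk, hKmin'⟩ := hAcomp.exists_isMinOn hAne hKcont
  obtain ⟨abb, habb, hβmin'⟩ := hAcomp.exists_isMinOn hAne hβcont.continuousOn
  have hKmax : ∀ ab ∈ A, K ab ≤ K abK := fun ab hab => hKmax' hab
  have hβmax : ∀ ab ∈ A, ab.2 i0 ≤ abB.2 i0 := fun ab hab => hβmax' hab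
  have hKmin : ∀ ab ∈ A, K abk ≤ K ab := fun ab hab => hKmin' hab
  have hβmin : ∀ ab ∈ A, abb.2 i0 ≤ ab.2 i0 := fun ab hab => hβmin' hab
  -- tendsto at +∞
  obtain ⟨ab0, hab0⟩ := hAne
  have htop : Filter.Tendsto (ghat m G c A) Filter.atTop (nhds 0) := by
    have hb0 := hβpos ab0 hab0
    have hmt : Filter.Tendsto (fun z : ℝ => -(ab0.2 i0) * z) Filter.atTop Filter.atBot := by
      have h1 : Filter.Tendsto (fun z : ℝ => (ab0.2 i0) * z) Filter.atTop Filter.atTop :=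
        Filter.Tendsto.const_mul_atTop hb0 tendsto_id
      have := tendsto_neg_atTop_atBot.comp h1
      simpa [Function.comp_def, neg_mul] using this
    have h2 : Filter.Tendsto (fun z => fz z ab0) Filter.atTop (nhds 0) := by
      have h3 := Real.tendsto_exp_atBot.comp hmt
      have h4 := h3.const_mul (K ab0)
      simpa [Function.comp, hfzdef] using h4
    exact tendsto_of_tendsto_of_tendsto_of_le_of_le tendsto_const_nhds h2
      (fun z => (hgpos z).le) (fun z => hub z ab0 hab0)
  -- tendsto at -∞
  have hbot : Filter.Tendsto (ghat m G c A) Filter.atBot Filter.atTop := by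
    have hbb := hβpos abb habb
    have hlow : ∀ z : ℝ, z ≤ 0 → K abk * Real.exp (-(abb.2 i0) * z) ≤ ghat m G c A z := by
      intro z hz
      obtain ⟨ab, hab, he⟩ := hmin z
      rw [he]
      have h1 : K abk ≤ K ab := hKmin ab hab
      have h2 : Real.exp (-(abb.2 i0) * z) ≤ Real.exp (-(ab.2 i0) * z) := by
        apply Real.exp_le_exp.2
        nlinarith [hβmin ab hab]
      exact mul_le_mul h1 h2 (Real.exp_pos _).le (hKpos ab).le
    have h1 : Filter.Tendsto (fun z : ℝ => K abk * Real.exp (-(abb.2 i0) * z))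
        Filter.atBot Filter.atTop := by
      have h2 : Filter.Tendsto (fun z : ℝ => -(abb.2 i0) * z) Filter.atBot Filter.atTop := by
        have h3 : Filter.Tendsto (fun z : ℝ => (abb.2 i0) * (-z)) Filter.atBot Filter.atTop :=
          Filter.Tendsto.const_mul_atTop hbb tendsto_neg_atBot_atTop
        simpa [mul_neg, neg_mul] using h3
      exact Filter.Tendsto.const_mul_atTop (hKpos abk) (Real.tendsto_exp_atTop.comp h2)
    refine tendsto_atTop_mono' Filter.atBot ?_ h1
    filter_upwards [Filter.eventually_le_atBot (0:ℝ)] with z hz using hlow z hz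
  -- exponential difference estimate
  have hexp : ∀ x y cc : ℝ, y ≤ x → x ≤ cc →
      Real.exp x - Real.exp y ≤ Real.exp cc * (x - y) := by
    intro x y cc hyx hxc
    have h1 := Real.add_one_le_exp (y - x)
    have h2 : Real.exp (y - x) * Real.exp x = Real.exp y := by
      rw [← Real.exp_add]; ring_nf
    have h3 : Real.exp x ≤ Real.exp cc := Real.exp_le_exp.2 hxc
    nlinarith [Real.exp_pos x, mul_le_mul_of_nonneg_right h1 (Real.exp_pos x).le,
      mul_le_mul_of_nonneg_right h3 (sub_nonneg.2 hyx)]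
  -- key two-point estimate
  have hkey : ∀ M : ℝ, 0 ≤ M → ∀ z z' : ℝ, -M ≤ z → z ≤ z' → z' ≤ M →
      ghat m G c A z - ghat m G c A z'
        ≤ (K abK * (abB.2 i0 * Real.exp (abB.2 i0 * M))) * (z' - z) := by
    intro M hM z z' hMz hzz' hz'M
    obtain ⟨ab, hab, he⟩ := hmin z'
    have hu := hub z ab hab
    have hb : 0 < ab.2 i0 := hβpos ab hab
    have hbB : ab.2 i0 ≤ abB.2 i0 := hβmax ab hab
    have hKb : K ab ≤ K abK := hKmax ab hab
    have hbBpos : 0 < abB.2 i0 := hβpos abB habB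
    have hyx : -(ab.2 i0) * z' ≤ -(ab.2 i0) * z := by nlinarith
    have hxc : -(ab.2 i0) * z ≤ abB.2 i0 * M := by nlinarith
    have h4 := hexp (-(ab.2 i0) * z) (-(ab.2 i0) * z') (abB.2 i0 * M) hyx hxc
    have h5 : K ab * (Real.exp (-(ab.2 i0) * z) - Real.exp (-(ab.2 i0) * z'))
        ≤ K ab * (Real.exp (abB.2 i0 * M) * (ab.2 i0 * (z' - z))) := by
      have := mul_le_mul_of_nonneg_left h4 (hKpos ab).le
      nlinarith [this]
    have h6 : K ab * ab.2 i0 ≤ K abK * abB.2 i0 :=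
      mul_le_mul hKb hbB hb.le (hKpos abK).le
    have h7 : (0:ℝ) ≤ Real.exp (abB.2 i0 * M) * (z' - z) :=
      mul_nonneg (Real.exp_pos _).le (by linarith)
    have h8 := mul_le_mul_of_nonneg_right h6 h7
    rw [he]
    have h9 : ghat m G c A z - fz z' ab ≤ fz z ab - fz z' ab := by linarith
    have h10 : fz z ab - fz z' ab
        = K ab * (Real.exp (-(ab.2 i0) * z) - Real.exp (-(ab.2 i0) * z')) := by
      simp only [hfzdef]; ring
    nlinarith [h9, h10, h5, h8]
  -- continuity
  have hcont : Continuous (ghat m G c A) := by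
    rw [continuous_iff_continuousAt]
    intro z0
    set M : ℝ := |z0| + 1 with hMdef
    have hM0 : 0 ≤ M := by positivity
    set C : ℝ := K abK * (abB.2 i0 * Real.exp (abB.2 i0 * M)) with hCdef
    have hloc : ∀ z' : ℝ, |z' - z0| ≤ 1 →
        |ghat m G c A z' - ghat m G c A z0| ≤ C * |z' - z0| := by
      intro z' hz'
      have hz0M : -M ≤ z0 ∧ z0 ≤ M := by
        constructor <;> [nlinarith [abs_nonneg z0, neg_abs_le z0]; nlinarith [le_abs_self z0]]
      have hz'M : -M ≤ z' ∧ z' ≤ M := by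
        have h1 := abs_le.1 hz'
        have h2 := neg_abs_le z0
        have h3 := le_abs_self z0
        constructor <;> [linarith [h1.1]; linarith [h1.2]]
      rcases le_total z0 z' with h | h
      · have hk := hkey M hM0 z0 z' hz0M.1 h hz'M.2
        have hmono : ghat m G c A z' ≤ ghat m G c A z0 := hSA.antitone h
        rw [abs_of_nonpos (by linarith), abs_of_nonneg (by linarith), hCdef]
        linarith
      · have hk := hkey M hM0 z' z0 hz'M.1 h hz0M.2
        have hmono : ghat m G c A z0 ≤ ghat m G c A z' := hSA.antitone h
        rw [abs_of_nonneg (by linarith), abs_of_nonpos (show z' - z0 ≤ 0 by linarith),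
          neg_sub, hCdef]
        linarith
    have h0 : Filter.Tendsto (fun z' : ℝ => C * |z' - z0|) (nhds z0) (nhds 0) := by
      have hcc : Continuous (fun z' : ℝ => C * |z' - z0|) := by
        have : Continuous (fun z' : ℝ => z' - z0) := continuous_id.sub continuous_const
        exact continuous_const.mul this.abs
      simpa using hcc.tendsto z0
    have hev : ∀ᶠ z' in nhds z0, |ghat m G c A z' - ghat m G c A z0| ≤ C * |z' - z0| := by
      filter_upwards [Metric.closedBall_mem_nhds z0 zero_lt_one] with z' hz'
      exact hloc z' (by simpa [Real.dist_eq] using hz')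
    have hsq := squeeze_zero' (Filter.Eventually.of_forall fun z' => abs_nonneg _) hev h0
    rw [ContinuousAt, tendsto_iff_dist_tendsto_zero]
    simpa [Real.dist_eq] using hsq
  -- existence and uniqueness
  refine ⟨hcont, hSA, htop, hbot, ?_⟩
  intro α hα
  have h1 : ∀ᶠ z in Filter.atTop, ghat m G c A z < α :=
    Filter.Tendsto.eventually_lt_const hα htop
  have h2 : ∀ᶠ z in Filter.atBot, α < ghat m G c A z :=
    hbot.eventually (Filter.eventually_gt_atTop α)
  obtain ⟨z1, hz1⟩ := h1.exists
  obtain ⟨z0, hz0, hz01⟩ := (h2.and (Filter.eventually_le_atBot z1)).exists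
  have hsub := intermediate_value_Icc' hz01 hcont.continuousOn
  obtain ⟨z, _, hzeq⟩ := hsub ⟨hz1.le, hz0.le⟩
  exact ⟨z, hzeq, fun y hy => hSA.injective (hy.trans hzeq.symm)⟩
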